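/- Let 3/4 < p < 1 and t ≥ 0. Then (4p−3)·n^{4p−3}·∑_{k=n+1}^{n+⌊nt⌋} k^{2−4p} → 1 − (1+t)^{3−4p} as n → ∞. -/

import Mathlib

open Filter Real Set

lemma aux_floor_ratio (t : ℝ) (ht : 0 ≤ t) :
    Tendsto (fun n : ℕ => (⌊(n:ℝ) * t⌋₊ : ℝ) / n) atTop (nhds t) := by
  apply tendsto_of_tendsto_of_tendsto_of_le_of_le'
    (g := fun n : ℕ => t - 1 / (n:ℝ)) (h := fun _ : ℕ => t)
  · simpa using tendsto_const_nhds.sub (tendsto_one_div_atTop_nhds_zero_nat (𝕜 := ℝ))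
  · exact tendsto_const_nhds
  · filter_upwards [eventually_ge_atTop 1] with n hn
    have hn' : (0:ℝ) < n := by exact_mod_cast hn
    have h1 : (n:ℝ) * t < ⌊(n:ℝ) * t⌋₊ + 1 := Nat.lt_floor_add_one _
    rw [sub_le_iff_le_add, ← add_div, le_div_iff₀ hn']
    nlinarith
  · filter_upwards [eventually_ge_atTop 1] with n hn
    have hn' : (0:ℝ) < n := by exact_mod_cast hn
    have h1 : (⌊(n:ℝ) * t⌋₊ : ℝ) ≤ (n:ℝ) * t := Nat.floor_le (by positivity)
    rw [div_le_iff₀ hn']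
    linarith

theorem stmt_12 (p : ℝ) (hp : 3/4 < p) (hp' : p < 1) (t : ℝ) (ht : 0 ≤ t) :
    Filter.Tendsto
      (fun n : ℕ => (4*p - 3) * (n:ℝ) ^ (4*p - 3) *
        ∑ k ∈ Finset.Icc (n+1) (n + ⌊(n:ℝ) * t⌋₊), (k:ℝ) ^ (2 - 4*p))
      Filter.atTop (nhds (1 - (1 + t) ^ (3 - 4*p))) := by
  have he : (0:ℝ) < 4*p - 3 := by linarith
  have hq : 3 - 4*p ≠ 0 := by linarith
  have h1t : (0:ℝ) < 1 + t := by linarith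
  have hfl := aux_floor_ratio t ht
  have hinv : Tendsto (fun n : ℕ => 1 / (n:ℝ)) atTop (nhds 0) :=
    tendsto_one_div_atTop_nhds_zero_nat (𝕜 := ℝ)
  -- ratio limits
  have hR : Tendsto (fun n : ℕ => ((n + ⌊(n:ℝ)*t⌋₊ : ℕ) : ℝ) / n) atTop (nhds (1 + t)) := by
    refine ((tendsto_const_nhds (x := (1:ℝ)) (f := atTop (α := ℕ))).add hfl).congr' ?_
    filter_upwards [eventually_ge_atTop 1] with n hn
    have hn' : (n:ℝ) ≠ 0 := Nat.cast_ne_zero.mpr (by omega)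
    push_cast
    field_simp
  have hR' : Tendsto (fun n : ℕ => (((n + ⌊(n:ℝ)*t⌋₊ : ℕ) : ℝ) + 1) / n) atTop
      (nhds (1 + t)) := by
    have : Tendsto (fun n : ℕ => ((n + ⌊(n:ℝ)*t⌋₊ : ℕ) : ℝ) / n + 1 / n) atTop
        (nhds ((1 + t) + 0)) := hR.add hinv
    rw [add_zero] at this
    refine this.congr' ?_
    filter_upwards [eventually_ge_atTop 1] with n hn
    have hn' : (n:ℝ) ≠ 0 := Nat.cast_ne_zero.mpr (by omega)
    rw [← add_div]
  have hQ : Tendsto (fun n : ℕ => ((n:ℝ) + 1) / n) atTop (nhds 1) := by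
    have : Tendsto (fun n : ℕ => 1 + 1 / (n:ℝ)) atTop (nhds (1 + 0)) :=
      tendsto_const_nhds.add hinv
    rw [add_zero] at this
    refine this.congr' ?_
    filter_upwards [eventually_ge_atTop 1] with n hn
    have hn' : (n:ℝ) ≠ 0 := Nat.cast_ne_zero.mpr (by omega)
    field_simp
  -- limits of the bounding sequences
  have hg : Tendsto (fun n : ℕ => (((n:ℝ) + 1) / n) ^ (3 - 4*p)
      - ((((n + ⌊(n:ℝ)*t⌋₊ : ℕ) : ℝ) + 1) / n) ^ (3 - 4*p)) atTop
      (nhds (1 - (1 + t) ^ (3 - 4*p))) := by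
    have := (hQ.rpow_const (p := 3 - 4*p) (Or.inl one_ne_zero)).sub
      (hR'.rpow_const (p := 3 - 4*p) (Or.inl h1t.ne'))
    rwa [Real.one_rpow] at this
  have hh : Tendsto (fun n : ℕ => 1
      - (((n + ⌊(n:ℝ)*t⌋₊ : ℕ) : ℝ) / n) ^ (3 - 4*p)) atTop
      (nhds (1 - (1 + t) ^ (3 - 4*p))) :=
    tendsto_const_nhds.sub (hR.rpow_const (p := 3 - 4*p) (Or.inl h1t.ne'))
  apply tendsto_of_tendsto_of_tendsto_of_le_of_le' hg hh
  · -- lower bound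
    filter_upwards [eventually_ge_atTop 1] with n hn
    set m := ⌊(n:ℝ) * t⌋₊ with hm
    have hN : (0:ℝ) < n := by exact_mod_cast hn
    have hNe : (n:ℝ) ≠ 0 := hN.ne'
    -- integral lower bound for the sum
    have hanti : AntitoneOn (fun x : ℝ => x ^ (2 - 4*p))
        (Set.Icc ((n+1 : ℕ) : ℝ) ((n + m + 1 : ℕ) : ℝ)) := by
      intro x hx y hy hxy
      have hx0 : (0:ℝ) < x := lt_of_lt_of_le (by positivity) hx.1
      exact Real.rpow_le_rpow_of_nonpos hx0 hxy (by linarith)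
    have hint := hanti.integral_le_sum_Ico (Nat.succ_le_succ (Nat.le_add_right n m))
    simp only [Nat.succ_eq_add_one, Finset.Ico_add_one_right_eq_Icc] at hint
    have hIval : (∫ x in ((n+1:ℕ):ℝ)..((n + m + 1 : ℕ):ℝ), x ^ (2 - 4*p))
        = (((n + m + 1 : ℕ):ℝ) ^ (3 - 4*p) - ((n+1:ℕ):ℝ) ^ (3 - 4*p)) / (3 - 4*p) := by
      rw [integral_rpow (Or.inr ⟨by intro h; linarith [h], Set.notMem_uIcc_of_lt
        (by positivity) (by positivity)⟩)]
      rw [show 2 - 4*p + 1 = 3 - 4*p from by ring]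
    rw [hIval] at hint
    have hmul : (4*p - 3) * (n:ℝ) ^ (4*p - 3) *
        ((((n + m + 1 : ℕ):ℝ) ^ (3 - 4*p) - ((n+1:ℕ):ℝ) ^ (3 - 4*p)) / (3 - 4*p))
        ≤ (4*p - 3) * (n:ℝ) ^ (4*p - 3) *
          ∑ k ∈ Finset.Icc (n+1) (n + m), (k:ℝ) ^ (2 - 4*p) := by
      apply mul_le_mul_of_nonneg_left hint
      positivity
    refine le_trans (le_of_eq ?_) hmul
    have hcast1 : ((n+1:ℕ):ℝ) = (n:ℝ) + 1 := by push_cast; ring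
    have hcast2 : ((n + m + 1 : ℕ):ℝ) = ((n + m : ℕ):ℝ) + 1 := by push_cast; ring
    rw [hcast1, hcast2, Real.div_rpow (by positivity) hN.le,
      Real.div_rpow (by positivity) hN.le]
    have hA : (n:ℝ) ^ (4*p - 3) = ((n:ℝ) ^ (3 - 4*p))⁻¹ := by
      rw [← Real.rpow_neg hN.le, show -(3 - 4*p) = 4*p - 3 from by ring]
    have hC : (n:ℝ) ^ (3 - 4*p) ≠ 0 := by positivity
    rw [hA]
    field_simp
    ring
  · -- upper bound
    filter_upwards [eventually_ge_atTop 1] with n hn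
    set m := ⌊(n:ℝ) * t⌋₊ with hm
    have hN : (0:ℝ) < n := by exact_mod_cast hn
    have hNe : (n:ℝ) ≠ 0 := hN.ne'
    have hanti : AntitoneOn (fun x : ℝ => x ^ (2 - 4*p))
        (Set.Icc ((n : ℕ) : ℝ) ((n + m : ℕ) : ℝ)) := by
      intro x hx y hy hxy
      have hx0 : (0:ℝ) < x := lt_of_lt_of_le hN hx.1
      exact Real.rpow_le_rpow_of_nonpos hx0 hxy (by linarith)
    have hint := hanti.sum_le_integral_Ico (Nat.le_add_right n m)
    -- reindex the sum
    have hre : (∑ i ∈ Finset.Ico n (n + m), ((i + 1 : ℕ):ℝ) ^ (2 - 4*p))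
        = ∑ k ∈ Finset.Icc (n+1) (n + m), (k:ℝ) ^ (2 - 4*p) := by
      rw [← Finset.Ico_add_one_right_eq_Icc, Finset.sum_Ico_eq_sum_range, Finset.sum_Ico_eq_sum_range]
      have : n + m + 1 - (n + 1) = n + m - n := by omega
      rw [this]
      refine Finset.sum_congr rfl fun j _ => ?_
      congr 1
      push_cast
      ring
    rw [hre] at hint
    have hIval : (∫ x in ((n:ℕ):ℝ)..((n + m : ℕ):ℝ), x ^ (2 - 4*p))
        = (((n + m : ℕ):ℝ) ^ (3 - 4*p) - ((n:ℕ):ℝ) ^ (3 - 4*p)) / (3 - 4*p) := by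
      rw [integral_rpow (Or.inr ⟨by intro h; linarith [h], Set.notMem_uIcc_of_lt
        (by exact_mod_cast hn) (by push_cast; positivity)⟩)]
      rw [show 2 - 4*p + 1 = 3 - 4*p from by ring]
    rw [hIval] at hint
    have hmul : (4*p - 3) * (n:ℝ) ^ (4*p - 3) *
          ∑ k ∈ Finset.Icc (n+1) (n + m), (k:ℝ) ^ (2 - 4*p)
        ≤ (4*p - 3) * (n:ℝ) ^ (4*p - 3) *
        ((((n + m : ℕ):ℝ) ^ (3 - 4*p) - ((n:ℕ):ℝ) ^ (3 - 4*p)) / (3 - 4*p)) := by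
      apply mul_le_mul_of_nonneg_left hint
      positivity
    refine le_trans hmul (le_of_eq ?_)
    rw [Real.div_rpow (by positivity) hN.le]
    have hA : (n:ℝ) ^ (4*p - 3) = ((n:ℝ) ^ (3 - 4*p))⁻¹ := by
      rw [← Real.rpow_neg hN.le, show -(3 - 4*p) = 4*p - 3 from by ring]
    have hC : (n:ℝ) ^ (3 - 4*p) ≠ 0 := by positivity
    rw [hA]
    field_simp
    ring
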